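/- Let p > 3 be prime and let k ≥ t ≥ 1 and t ≥ s ≥ 1 be integers. Then gcd(R_{p^k}/R_{p^t}, R_{p^s}) = 1, where R_n = (10^n - 1)/9 (note R_{p^t} divides R_{p^k}). -/

import Mathlib

def repunit (n : ℕ) : ℕ := (10 ^ n - 1) / 9

lemma nine_dvd_aux (n : ℕ) : 9 ∣ 10 ^ n - 1 := by
  simpa using Nat.sub_dvd_pow_sub_pow 10 1 n

lemma nine_mul_repunit (n : ℕ) : 9 * repunit n = 10 ^ n - 1 :=
  Nat.mul_div_cancel' (nine_dvd_aux n)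

lemma repunit_dvd_repunit {m n : ℕ} (h : m ∣ n) : repunit m ∣ repunit n := by
  have h1 : 10 ^ m - 1 ∣ 10 ^ n - 1 := by
    obtain ⟨c, rfl⟩ := h
    simpa [pow_mul] using Nat.sub_dvd_pow_sub_pow (10 ^ m) 1 c
  rw [← nine_mul_repunit, ← nine_mul_repunit] at h1
  exact (mul_dvd_mul_iff_left (by norm_num : (9:ℕ) ≠ 0)).mp h1

lemma repunit_pos {n : ℕ} (h : 1 ≤ n) : 0 < repunit n := by
  have : 9 ≤ 10 ^ n - 1 := by
    have : 10 ≤ 10 ^ n := by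
      calc 10 = 10 ^ 1 := (pow_one 10).symm
      _ ≤ 10 ^ n := Nat.pow_le_pow_right (by norm_num) h
    omega
  have h9 := nine_mul_repunit n
  by_contra hc
  push_neg at hc
  interval_cases (repunit n)
  omega

theorem gcd_repunit_pow_div (p k t s : ℕ) (hp : p.Prime) (hp3 : 3 < p)
    (hkt : t ≤ k) (hts : s ≤ t) (hs : 1 ≤ s) :
    Nat.gcd (repunit (p ^ k) / repunit (p ^ t)) (repunit (p ^ s)) = 1 := by
  have hp1 : 1 < p := hp.one_lt
  set T : ℕ := 10 ^ p ^ t with hT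
  set N : ℕ := p ^ (k - t) with hN
  set Q : ℕ := repunit (p ^ k) / repunit (p ^ t) with hQ
  set g : ℕ := Nat.gcd Q (repunit (p ^ s)) with hg
  have hst : 1 ≤ p ^ s := Nat.one_le_pow _ _ hp.pos
  have htt : 1 ≤ p ^ t := Nat.one_le_pow _ _ hp.pos
  have hRt_dvd_Rk : repunit (p ^ t) ∣ repunit (p ^ k) :=
    repunit_dvd_repunit (pow_dvd_pow p hkt)
  have hRtQ : repunit (p ^ t) * Q = repunit (p ^ k) := Nat.mul_div_cancel' hRt_dvd_Rk
  -- Q is a geometric sum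
  have hQsum : Q = ∑ i ∈ Finset.range N, T ^ i := by
    have hmul : (T - 1) * Q = T ^ N - 1 := by
      have h1 : 9 * (repunit (p ^ t) * Q) = 9 * repunit (p ^ k) := by rw [hRtQ]
      rw [← mul_assoc, nine_mul_repunit, nine_mul_repunit] at h1
      have hpk : p ^ k = p ^ t * p ^ (k - t) := by
        rw [← pow_add]; congr 1; omega
      rw [hpk, pow_mul] at h1
      exact h1
    have hsum : (T - 1) * (∑ i ∈ Finset.range N, T ^ i) = T ^ N - 1 := by
      have hT1 : 1 ≤ T := Nat.one_le_pow _ _ (by norm_num)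
      have := geom_sum_mul (R := ℤ) (x := (T : ℤ)) N
      have hcast : ((T : ℤ) - 1) * (∑ i ∈ Finset.range N, (T : ℤ) ^ i)
          = (T : ℤ) ^ N - 1 := by rw [mul_comm]; exact this
      have hTN1 : 1 ≤ T ^ N := Nat.one_le_pow _ _ (by omega)
      zify [hT1, hTN1]
      push_cast at hcast ⊢
      linarith [hcast]
    have hTpos : 1 < T := by
      calc 1 < 10 := by norm_num
      _ = 10 ^ 1 := (pow_one 10).symm
      _ ≤ T := Nat.pow_le_pow_right (by norm_num) htt
    have : (T - 1) * Q = (T - 1) * (∑ i ∈ Finset.range N, T ^ i) := by rw [hmul, hsum]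
    exact Nat.eq_of_mul_eq_mul_left (by omega) this
  -- g divides T - 1
  have hgQ : g ∣ Q := Nat.gcd_dvd_left _ _
  have hgR : g ∣ repunit (p ^ s) := Nat.gcd_dvd_right _ _
  have hgT : g ∣ T - 1 := by
    calc g ∣ repunit (p ^ s) := hgR
    _ ∣ repunit (p ^ t) := repunit_dvd_repunit (pow_dvd_pow p hts)
    _ ∣ T - 1 := by rw [← nine_mul_repunit]; exact Dvd.intro_left 9 rfl
  have hgpos : 0 < g := Nat.gcd_pos_of_pos_right _ (repunit_pos hst)
  haveI : NeZero g := ⟨hgpos.ne'⟩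
  -- In ZMod g, T = 1, so Q = N, and Q = 0, hence g ∣ N
  have hT1 : 1 ≤ T := Nat.one_le_pow _ _ (by norm_num)
  have hTmod : (T : ZMod g) = 1 := by
    have : T ≡ 1 [MOD g] := ((Nat.modEq_iff_dvd' hT1).mpr hgT).symm
    have := (Nat.modEq_iff_dvd' hT1).mpr hgT
    have h2 : ((1 : ℕ) : ZMod g) = ((T : ℕ) : ZMod g) :=
      (ZMod.natCast_eq_natCast_iff _ _ _).mpr this
    simpa using h2.symm
  have hgN : g ∣ N := by
    have hQ0 : (Q : ZMod g) = 0 := (ZMod.natCast_eq_zero_iff _ _).mpr hgQ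
    have : (Q : ZMod g) = (N : ZMod g) := by
      rw [hQsum]
      push_cast
      simp [hTmod]
    rw [hQ0] at this
    exact (ZMod.natCast_eq_zero_iff _ _).mp this.symm
  -- hence g is a power of p; if g ≠ 1 then p ∣ g
  by_contra hgne
  have hpg : p ∣ g := by
    obtain ⟨j, hj, hgj⟩ := (Nat.dvd_prime_pow hp).mp hgN
    cases j with
    | zero => simp [hgj] at hgne
    | succ j => rw [hgj]; exact dvd_pow_self p (Nat.succ_ne_zero j)
  -- so p ∣ 10 ^ (p ^ s) - 1
  have hp10 : p ∣ 10 ^ p ^ s - 1 := by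
    calc p ∣ g := hpg
    _ ∣ repunit (p ^ s) := hgR
    _ ∣ 10 ^ p ^ s - 1 := by rw [← nine_mul_repunit]; exact Dvd.intro_left 9 rfl
  -- work in ZMod p
  haveI : Fact p.Prime := ⟨hp⟩
  have h10s : (10 : ZMod p) ^ p ^ s = 1 := by
    have h1le : 1 ≤ 10 ^ p ^ s := Nat.one_le_pow _ _ (by norm_num)
    have : (10:ℕ) ^ p ^ s ≡ 1 [MOD p] := ((Nat.modEq_iff_dvd' h1le).mpr hp10).symm
    have h2 := (ZMod.natCast_eq_natCast_iff _ _ _).mpr this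
    push_cast at h2
    exact h2
  have h10 : (10 : ZMod p) = 1 := by
    rw [ZMod.pow_card_pow] at h10s
    exact h10s
  have h9 : p ∣ 9 := by
    have : (10:ℕ) ≡ 1 [MOD p] := by
      have := (ZMod.natCast_eq_natCast_iff 10 1 p).mp (by push_cast; exact h10)
      exact this
    have := (Nat.modEq_iff_dvd' (by norm_num : 1 ≤ 10)).mp this.symm
    simpa using this
  have : p ∣ 3 := hp.dvd_of_dvd_pow (n := 2) (by norm_num; exact h9)
  have := Nat.le_of_dvd (by norm_num) this
  omega
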